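/- Let K be a transition kernel on (E, ℰ) with invariant probability measure π, and let B₀, B₁, B₂ ∈ ℰ have positive π-measure. If B₂ is accessible (with positive probability in finitely many steps of the K-chain) from π-almost every point of B₁, and B₁ is accessible from π-almost every point of B₀, then B₂ is accessible from π-almost every point of B₀. -/

import Mathlib

open MeasureTheory ProbabilityTheory

/-- Iterated (n-step) transition kernel. -/
noncomputable def kpow {E : Type*} [MeasurableSpace E] (K : Kernel E E) : ℕ → Kernel E E
  | 0 => Kernel.id
  | n + 1 => (kpow K n).comp K

instance kpow_markov {E : Type*} [MeasurableSpace E] (K : Kernel E E) [IsMarkovKernel K] :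
    ∀ n, IsMarkovKernel (kpow K n)
  | 0 => by unfold kpow; infer_instance
  | n + 1 => by
    have := kpow_markov K n
    unfold kpow; infer_instance

lemma kpow_succ' {E : Type*} [MeasurableSpace E] (K : Kernel E E) [IsMarkovKernel K] :
    ∀ m, kpow K (m + 1) = K.comp (kpow K m)
  | 0 => by
    show (kpow K 0).comp K = K.comp Kernel.id
    rw [Kernel.comp_id]; show Kernel.id.comp K = K; rw [Kernel.id_comp]
  | m + 1 => by
    show (kpow K (m + 1)).comp K = K.comp ((kpow K m).comp K)
    rw [kpow_succ' K m, Kernel.comp_assoc]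

lemma kpow_add {E : Type*} [MeasurableSpace E] (K : Kernel E E) [IsMarkovKernel K] :
    ∀ n m, kpow K (n + m) = (kpow K n).comp (kpow K m)
  | 0, m => by
    rw [Nat.zero_add]
    show kpow K m = Kernel.id.comp (kpow K m); rw [Kernel.id_comp]
  | n + 1, m => by
    have h1 : n + 1 + m = (n + m) + 1 := by ring
    rw [h1]
    show (kpow K (n + m)).comp K = ((kpow K n).comp K).comp (kpow K m)
    rw [kpow_add K n m, Kernel.comp_assoc]
    have h2 : kpow K m ∘ₖ K = K ∘ₖ kpow K m := kpow_succ' K m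
    rw [h2, Kernel.comp_assoc]

lemma bind_kpow {E : Type*} [MeasurableSpace E] (π : Measure E) [IsProbabilityMeasure π]
    (K : Kernel E E) [IsMarkovKernel K] (hinv : π.bind K = π) :
    ∀ n, π.bind (kpow K n) = π
  | 0 => by
    show π.bind Kernel.id = π
    have : ⇑(Kernel.id : Kernel E E) = fun x => Measure.dirac x := by
      funext x; simp [Kernel.id_apply]
    rw [this]; exact Measure.bind_dirac
  | n + 1 => by
    show π.bind ((kpow K n).comp K) = π
    have hc : ⇑((kpow K n).comp K) = fun x => (K x).bind (kpow K n) := by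
      funext x; exact Kernel.comp_apply _ _ _
    rw [hc, ← Measure.bind_bind (K.measurable.aemeasurable) ((kpow K n).measurable.aemeasurable), hinv]
    exact bind_kpow π K hinv n

/-- successive accessibilities: if `B₂` is accessible from π-a.e. point
of `B₁` and `B₁` is accessible from π-a.e. point of `B₀`, then `B₂` is accessible
from π-a.e. point of `B₀`. -/
theorem successive_accessibilities
    {E : Type*} [MeasurableSpace E]
    (π : Measure E) [IsProbabilityMeasure π]
    (K : Kernel E E) [IsMarkovKernel K]
    (hinv : π.bind K = π)
    (B₀ B₁ B₂ : Set E)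
    (h₀ : MeasurableSet B₀) (h₁ : MeasurableSet B₁) (h₂ : MeasurableSet B₂)
    (hπ₀ : 0 < π B₀) (hπ₁ : 0 < π B₁) (hπ₂ : 0 < π B₂)
    (h12 : ∀ᵐ x ∂π, x ∈ B₁ → ∃ n : ℕ, 0 < kpow K n x B₂)
    (h01 : ∀ᵐ x ∂π, x ∈ B₀ → ∃ n : ℕ, 0 < kpow K n x B₁) :
    ∀ᵐ x ∂π, x ∈ B₀ → ∃ n : ℕ, 0 < kpow K n x B₂ := by
  -- G k : points with k-step access to B₂
  set G : ℕ → Set E := fun k => {y | 0 < kpow K k y B₂} with hG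
  have hGmeas : ∀ k, MeasurableSet (G k) := fun k => by
    have : G k = (fun y => kpow K k y B₂) ⁻¹' (Set.Ioi 0) := by
      ext y; simp [hG]
    rw [this]
    exact (Kernel.measurable_coe _ h₂) measurableSet_Ioi
  -- N : bad set inside B₁
  set N : Set E := B₁ \ ⋃ k, G k with hN
  have hNmeas : MeasurableSet N := h₁.diff (MeasurableSet.iUnion hGmeas)
  have hNnull : π N = 0 := by
    rw [ae_iff] at h12
    refine le_antisymm (le_trans (measure_mono ?_) (le_of_eq h12)) zero_le
    intro x hx
    simp only [Set.mem_setOf_eq, not_forall]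
    refine ⟨hx.1, ?_⟩
    have := hx.2
    simp only [Set.mem_iUnion, not_exists, hG, Set.mem_setOf_eq] at this
    push_neg
    intro n
    exact le_of_not_gt (this n)
  -- a.e. x, for every m, kpow K m x N = 0
  have hae : ∀ᵐ x ∂π, ∀ m, kpow K m x N = 0 := by
    rw [ae_all_iff]
    intro m
    have h0 : ∫⁻ x, kpow K m x N ∂π = 0 := by
      rw [← Measure.bind_apply hNmeas (kpow K m).measurable.aemeasurable,
        bind_kpow π K hinv m, hNnull]
    have := (lintegral_eq_zero_iff (Kernel.measurable_coe _ hNmeas)).mp h0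
    filter_upwards [this] with x hx using hx
  filter_upwards [h01, hae] with x hx hxN hxB₀
  obtain ⟨m, hm⟩ := hx hxB₀
  -- kpow K m x (B₁ \ N) > 0
  have hsub : B₁ ⊆ N ∪ ⋃ k, G k := by
    intro y hy
    by_cases h : y ∈ ⋃ k, G k
    · exact Or.inr h
    · exact Or.inl ⟨hy, h⟩
  have hpos : 0 < kpow K m x (⋃ k, G k) := by
    by_contra hcon
    push_neg at hcon
    have hU : kpow K m x (⋃ k, G k) = 0 := le_antisymm hcon zero_le
    have : kpow K m x B₁ = 0 := by
      refine le_antisymm (le_trans (measure_mono hsub) ?_) zero_le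
      calc kpow K m x (N ∪ ⋃ k, G k) ≤ kpow K m x N + kpow K m x (⋃ k, G k) :=
        measure_union_le _ _
      _ = 0 := by rw [hxN m, hU]; simp
    exact absurd this (ne_of_gt hm)
  -- pick k with kpow K m x (G k) > 0
  have : ∃ k, 0 < kpow K m x (G k) := by
    by_contra hcon
    push_neg at hcon
    have : kpow K m x (⋃ k, G k) = 0 :=
      measure_iUnion_null fun k => le_antisymm (hcon k) zero_le
    exact absurd this (ne_of_gt hpos)
  obtain ⟨k, hk⟩ := this
  refine ⟨k + m, ?_⟩
  have hcomp : kpow K (k + m) x B₂ = ∫⁻ y, kpow K k y B₂ ∂(kpow K m x) := by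
    rw [kpow_add K k m]
    exact Kernel.comp_apply' _ _ _ h₂
  rw [hcomp]
  by_contra hcon
  push_neg at hcon
  have h0 : ∫⁻ y, kpow K k y B₂ ∂(kpow K m x) = 0 := le_antisymm hcon zero_le
  have := (lintegral_eq_zero_iff (Kernel.measurable_coe _ h₂)).mp h0
  have hnull : kpow K m x (G k) = 0 := by
    refine measure_mono_null ?_ (ae_iff.mp this)
    intro y hy
    simp only [Set.mem_setOf_eq, Pi.zero_apply]
    exact ne_of_gt hy
  exact absurd hnull (ne_of_gt hk)
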